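/- In particular, for the A-hypergeometric distribution q_{n,k}(s;x) = x^s/(s! Z_{n,k}(x)), the first moment is E[S_i] = x_i · Z_{n-i, k-1}(x)/Z_{n,k}(x) for each i ∈ [n-k+1]. -/

import Mathlib

open Finset

/-- The support `S_{n,k}` of size indices. -/
noncomputable def Snk (n k : ℕ) : Finset (Fin n → ℕ) :=
  (Finset.Iic (fun _ => n)).filter fun s => (∑ i, (i.1 + 1) * s i) = n ∧ (∑ i, s i) = k

/-- `Z_{n,k}(x)`, with `Z = 0` when the support is empty. -/
noncomputable def Zhyp (n k : ℕ) (x : ℕ → ℝ) : ℝ :=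
  ∑ s ∈ Snk n k, ∏ i, x (i.1 + 1) ^ s i / (Nat.factorial (s i) : ℝ)

lemma mem_Snk {n k : ℕ} {s : Fin n → ℕ} :
    s ∈ Snk n k ↔ (∀ j, s j ≤ n) ∧ (∑ j, (j.1 + 1) * s j) = n ∧ (∑ j, s j) = k := by
  simp [Snk, Finset.mem_filter, Finset.mem_Iic, Pi.le_def, and_assoc]

@[to_additive]
lemma prod_fin_truncate {M : Type*} [CommMonoid M] {n d : ℕ} (hd : d ≤ n)
    (F : ℕ → ℕ → M) (u : Fin n → ℕ)
    (h0 : ∀ j : Fin n, d ≤ j.1 → F j.1 (u j) = 1) :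
    ∏ j : Fin n, F j.1 (u j) = ∏ j : Fin d, F j.1 (u ⟨j.1, lt_of_lt_of_le j.2 hd⟩) := by
  set G : ℕ → M := fun m => if h : m < n then F m (u ⟨m, h⟩) else 1 with hG
  have h1 : ∏ j : Fin n, F j.1 (u j) = ∏ m ∈ Finset.range n, G m := by
    rw [← Fin.prod_univ_eq_prod_range]
    refine Finset.prod_congr rfl fun j _ => ?_
    simp [hG, j.2]
  have h2 : ∏ j : Fin d, F j.1 (u ⟨j.1, lt_of_lt_of_le j.2 hd⟩) = ∏ m ∈ Finset.range d, G m := by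
    rw [← Fin.prod_univ_eq_prod_range]
    refine Finset.prod_congr rfl fun j _ => ?_
    have hj : (j : ℕ) < n := lt_of_lt_of_le j.2 hd
    simp [hG, hj]
  rw [h1, h2]
  symm
  refine Finset.prod_subset (Finset.range_subset_range.2 hd) fun m hm hm' => ?_
  simp only [Finset.mem_range] at hm hm'
  simp only [hG, dif_pos hm]
  exact h0 ⟨m, hm⟩ (Nat.le_of_not_lt hm')

lemma fact_step (x : ℝ) (c : ℕ) (hc : 1 ≤ c) :
    (c : ℝ) * (x ^ c / (Nat.factorial c : ℝ)) =
      x * (x ^ (c - 1) / (Nat.factorial (c - 1) : ℝ)) := by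
  obtain ⟨c', rfl⟩ : ∃ c', c = c' + 1 := ⟨c - 1, by omega⟩
  have h1 : (Nat.factorial c' : ℝ) ≠ 0 := Nat.cast_ne_zero.2 (Nat.factorial_ne_zero c')
  have h2 : ((c' : ℝ) + 1) ≠ 0 := by positivity
  simp only [Nat.add_sub_cancel, pow_succ, Nat.factorial_succ, Nat.cast_mul, Nat.cast_add,
    Nat.cast_one]
  field_simp

theorem first_moment_A_hypergeometric
    (n k : ℕ) (hk : 1 ≤ k) (hkn : k ≤ n)
    (x : ℕ → ℝ) (hx : ∀ j, 0 < x j) (i : ℕ) (hi1 : 1 ≤ i) (hi2 : i ≤ n - k + 1) :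
    (∑ s ∈ Snk n k,
        (s ⟨i - 1, by omega⟩ : ℝ) *
          ∏ j, x (j.1 + 1) ^ s j / (Nat.factorial (s j) : ℝ)) / Zhyp n k x
    = x i * Zhyp (n - i) (k - 1) x / Zhyp n k x := by
  have hi0 : i - 1 < n := by omega
  set i0 : Fin n := ⟨i - 1, hi0⟩ with hi0def
  set d : ℕ := n - i with hddef
  have hdn : d ≤ n := Nat.sub_le n i
  have hdi : d + i = n := by omega
  -- the restricted support
  set A : Finset (Fin n → ℕ) := (Snk n k).filter (fun s => 1 ≤ s i0) with hA
  set φ : (Fin n → ℕ) → (Fin d → ℕ) :=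
    fun s j => s ⟨j.1, lt_of_lt_of_le j.2 hdn⟩ - (if j.1 = i - 1 then 1 else 0) with hφ
  set ψ : (Fin d → ℕ) → (Fin n → ℕ) :=
    fun t m => (if h : m.1 < d then t ⟨m.1, h⟩ else 0) + (if m.1 = i - 1 then 1 else 0) with hψ
  -- indicator sum facts
  have hind1 : ∑ m : Fin n, (m.1 + 1) * (if m.1 = i - 1 then 1 else 0) = i := by
    have heq : ∀ m : Fin n, (m.1 + 1) * (if m.1 = i - 1 then 1 else 0)
        = if m = i0 then (fun m : Fin n => m.1 + 1) m else 0 := by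
      intro m
      by_cases h : m = i0
      · subst h; simp [hi0def]
      · have : m.1 ≠ i - 1 := fun hh => h (Fin.ext hh)
        simp [h, this]
    rw [Finset.sum_congr rfl (fun m _ => heq m), Finset.sum_ite_eq' Finset.univ i0]
    simp [hi0def]
    omega
  have hind2 : ∑ m : Fin n, (if m.1 = i - 1 then 1 else 0) = 1 := by
    have heq : ∀ m : Fin n, (if m.1 = i - 1 then 1 else 0)
        = if m = i0 then (fun _ : Fin n => 1) m else 0 := by
      intro m
      by_cases h : m = i0
      · subst h; simp [hi0def]
      · have : m.1 ≠ i - 1 := fun hh => h (Fin.ext hh)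
        simp [h, this]
    rw [Finset.sum_congr rfl (fun m _ => heq m), Finset.sum_ite_eq' Finset.univ i0]
    simp
  -- structure facts for s ∈ A
  have hAfacts : ∀ s ∈ A, (∑ m : Fin n, (m.1 + 1) * (s m - (if m.1 = i - 1 then 1 else 0)) = d)
      ∧ (∑ m : Fin n, (s m - (if m.1 = i - 1 then 1 else 0)) = k - 1)
      ∧ (∀ m : Fin n, d ≤ m.1 → s m = (if m.1 = i - 1 then 1 else 0)) := by
    intro s hs
    rw [hA, Finset.mem_filter, mem_Snk] at hs
    obtain ⟨⟨hb, hn, hkk⟩, hs1⟩ := hs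
    have hle : ∀ m : Fin n, (if m.1 = i - 1 then 1 else 0) ≤ s m := by
      intro m
      by_cases h : m.1 = i - 1
      · have hm : m = i0 := Fin.ext h
        simp only [h, if_pos]
        rw [hm]; exact hs1
      · simp [h]
    have hsum1 : ∑ m : Fin n, ((m.1 + 1) * (s m - (if m.1 = i - 1 then 1 else 0))
        + (m.1 + 1) * (if m.1 = i - 1 then 1 else 0)) = n := by
      calc ∑ m : Fin n, ((m.1 + 1) * (s m - (if m.1 = i - 1 then 1 else 0))
            + (m.1 + 1) * (if m.1 = i - 1 then 1 else 0))
          = ∑ m : Fin n, (m.1 + 1) * s m := by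
            refine Finset.sum_congr rfl fun m _ => ?_
            rw [← Nat.mul_add, Nat.sub_add_cancel (hle m)]
        _ = n := hn
    rw [Finset.sum_add_distrib, hind1] at hsum1
    have hsum2 : ∑ m : Fin n, ((s m - (if m.1 = i - 1 then 1 else 0))
        + (if m.1 = i - 1 then 1 else 0)) = k := by
      calc ∑ m : Fin n, ((s m - (if m.1 = i - 1 then 1 else 0)) + (if m.1 = i - 1 then 1 else 0))
          = ∑ m : Fin n, s m := by
            refine Finset.sum_congr rfl fun m _ => ?_
            rw [Nat.sub_add_cancel (hle m)]
        _ = k := hkk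
    rw [Finset.sum_add_distrib, hind2] at hsum2
    have e1 : ∑ m : Fin n, (m.1 + 1) * (s m - (if m.1 = i - 1 then 1 else 0)) = d := by omega
    have e2 : ∑ m : Fin n, (s m - (if m.1 = i - 1 then 1 else 0)) = k - 1 := by omega
    refine ⟨e1, e2, fun m hm => ?_⟩
    have single := Finset.single_le_sum
      (f := fun m : Fin n => (m.1 + 1) * (s m - (if m.1 = i - 1 then 1 else 0)))
      (fun _ _ => Nat.zero_le _) (Finset.mem_univ m)
    rw [e1] at single
    have hz : s m - (if m.1 = i - 1 then 1 else 0) = 0 := by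
      by_contra hc
      have h1 : m.1 + 1 ≤ (m.1 + 1) * (s m - (if m.1 = i - 1 then 1 else 0)) :=
        Nat.le_mul_of_pos_right _ (by omega)
      omega
    have := hle m
    omega
  -- Step 1 : restrict the sum to A
  have step1 : (∑ s ∈ Snk n k, (s i0 : ℝ) *
        ∏ j, x (j.1 + 1) ^ s j / (Nat.factorial (s j) : ℝ))
      = ∑ s ∈ A, (s i0 : ℝ) * ∏ j, x (j.1 + 1) ^ s j / (Nat.factorial (s j) : ℝ) := by
    symm
    refine Finset.sum_subset (Finset.filter_subset _ _) fun s hs hns => ?_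
    have : s i0 = 0 := by
      rw [hA, Finset.mem_filter] at hns
      push_neg at hns
      have := hns hs
      omega
    simp [this]
  -- Step 2 : the bijection
  have step2 : (∑ s ∈ A, (s i0 : ℝ) * ∏ j, x (j.1 + 1) ^ s j / (Nat.factorial (s j) : ℝ))
      = ∑ t ∈ Snk d (k - 1), x i * ∏ j, x (j.1 + 1) ^ t j / (Nat.factorial (t j) : ℝ) := by
    refine Finset.sum_nbij' φ ψ ?_ ?_ ?_ ?_ ?_
    · -- φ maps into Snk d (k-1)
      intro s hs
      obtain ⟨e1, e2, e3⟩ := hAfacts s hs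
      rw [mem_Snk]
      have htr1 : (∑ m : Fin n, (m.1 + 1) * (s m - (if m.1 = i - 1 then 1 else 0)))
          = ∑ j : Fin d, ((j : ℕ) + 1) *
              (s ⟨j.1, lt_of_lt_of_le j.2 hdn⟩ - (if (j : ℕ) = i - 1 then 1 else 0)) :=
        sum_fin_truncate hdn (fun m v => (m + 1) * v)
          (fun m : Fin n => s m - (if m.1 = i - 1 then 1 else 0))
          (fun j hj => by simp [e3 j hj])
      have htr2 : (∑ m : Fin n, (s m - (if m.1 = i - 1 then 1 else 0)))
          = ∑ j : Fin d,
              (s ⟨j.1, lt_of_lt_of_le j.2 hdn⟩ - (if (j : ℕ) = i - 1 then 1 else 0)) :=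
        sum_fin_truncate hdn (fun _ v => v)
          (fun m : Fin n => s m - (if m.1 = i - 1 then 1 else 0))
          (fun j hj => by simp [e3 j hj])
      refine ⟨?_, ?_, ?_⟩
      · intro j
        have hj : (j : ℕ) < n := lt_of_lt_of_le j.2 hdn
        have single := Finset.single_le_sum
          (f := fun m : Fin n => (m.1 + 1) * (s m - (if m.1 = i - 1 then 1 else 0)))
          (fun _ _ => Nat.zero_le _) (Finset.mem_univ ⟨j.1, hj⟩)
        rw [e1] at single
        simp only at single
        have hmono : s ⟨j.1, hj⟩ - (if (j : ℕ) = i - 1 then 1 else 0)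
            ≤ (j.1 + 1) * (s ⟨j.1, hj⟩ - (if (j : ℕ) = i - 1 then 1 else 0)) :=
          Nat.le_mul_of_pos_left _ (Nat.succ_pos _)
        simp only [hφ]
        omega
      · exact htr1.symm.trans e1
      · exact htr2.symm.trans e2
    · -- ψ maps into A
      intro t ht
      rw [mem_Snk] at ht
      obtain ⟨tb, tn, tk⟩ := ht
      rw [hA, Finset.mem_filter, mem_Snk]
      have htr1 : (∑ m : Fin n, (m.1 + 1) * (if h : m.1 < d then t ⟨m.1, h⟩ else 0))
          = ∑ j : Fin d, ((j : ℕ) + 1) * (if h : (j : ℕ) < d then t ⟨(j : ℕ), h⟩ else 0) :=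
        sum_fin_truncate hdn (fun m v => (m + 1) * v)
          (fun m : Fin n => if h : m.1 < d then t ⟨m.1, h⟩ else 0)
          (fun j hj => by
            have hnd : ¬ (j : ℕ) < d := by omega
            simp [hnd])
      have htr2 : (∑ m : Fin n, (if h : m.1 < d then t ⟨m.1, h⟩ else 0))
          = ∑ j : Fin d, (if h : (j : ℕ) < d then t ⟨(j : ℕ), h⟩ else 0) :=
        sum_fin_truncate hdn (fun _ v => v)
          (fun m : Fin n => if h : m.1 < d then t ⟨m.1, h⟩ else 0)
          (fun j hj => by
            have hnd : ¬ (j : ℕ) < d := by omega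
            simp [hnd])
      have hv1 : (∑ m : Fin n, (m.1 + 1) * (if h : m.1 < d then t ⟨m.1, h⟩ else 0)) = d := by
        rw [htr1]
        refine Eq.trans (Finset.sum_congr rfl fun j _ => ?_) tn
        rw [dif_pos j.2]
      have hv2 : (∑ m : Fin n, (if h : m.1 < d then t ⟨m.1, h⟩ else 0)) = k - 1 := by
        rw [htr2]
        refine Eq.trans (Finset.sum_congr rfl fun j _ => ?_) tk
        rw [dif_pos j.2]
      refine ⟨⟨?_, ?_, ?_⟩, ?_⟩
      · intro m
        simp only [hψ]
        have h1 : (if h : m.1 < d then t ⟨m.1, h⟩ else 0) ≤ d := by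
          split
          · exact tb _
          · exact Nat.zero_le _
        have h2 : (if m.1 = i - 1 then 1 else 0) ≤ 1 := by split <;> omega
        omega
      · have hsplit : ∀ m : Fin n, (m.1 + 1) * ψ t m
            = (m.1 + 1) * (if h : m.1 < d then t ⟨m.1, h⟩ else 0)
              + (m.1 + 1) * (if m.1 = i - 1 then 1 else 0) := by
          intro m
          simp only [hψ]
          ring
        rw [Finset.sum_congr rfl (fun m _ => hsplit m), Finset.sum_add_distrib, hind1, hv1]
        omega
      · have hsplit : ∀ m : Fin n, ψ t m
            = (if h : m.1 < d then t ⟨m.1, h⟩ else 0) + (if m.1 = i - 1 then 1 else 0) := by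
          intro m; rfl
        rw [Finset.sum_congr rfl (fun m _ => hsplit m), Finset.sum_add_distrib, hind2, hv2]
        omega
      · simp only [hψ]
        show 1 ≤ (if h : (i - 1) < d then t ⟨i - 1, h⟩ else 0) + (if i - 1 = i - 1 then 1 else 0)
        rw [if_pos (rfl : i - 1 = i - 1)]
        omega
    · -- left inverse
      intro s hs
      obtain ⟨e1, e2, e3⟩ := hAfacts s hs
      have hs1 : 1 ≤ s i0 := by
        rw [hA, Finset.mem_filter] at hs; exact hs.2
      funext m
      by_cases hm : m.1 < d
      · simp only [hψ, hφ, dif_pos hm]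
        have hm' : (⟨m.1, lt_of_lt_of_le hm hdn⟩ : Fin n) = m := Fin.ext rfl
        rw [hm']
        by_cases hmi : m.1 = i - 1
        · have hmm : m = i0 := Fin.ext hmi
          rw [if_pos hmi, hmm]
          all_goals omega
        · rw [if_neg hmi]
          all_goals omega
      · simp only [hψ, dif_neg hm]
        rw [e3 m (by omega)]
        all_goals omega
    · -- right inverse
      intro t ht
      funext j
      simp only [hφ, hψ]
      have hj : (j : ℕ) < d := j.2
      rw [dif_pos hj, Nat.add_sub_cancel]
    · -- the summands agree
      intro s hs
      obtain ⟨e1, e2, e3⟩ := hAfacts s hs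
      have hs1 : 1 ≤ s i0 := by
        rw [hA, Finset.mem_filter] at hs; exact hs.2
      set t : Fin n → ℕ := fun m => s m - (if m.1 = i - 1 then 1 else 0) with htdef
      have hstep : (s i0 : ℝ) * ∏ j : Fin n, x (j.1 + 1) ^ s j / (Nat.factorial (s j) : ℝ)
          = x i * ∏ j : Fin n, x (j.1 + 1) ^ t j / (Nat.factorial (t j) : ℝ) := by
        rw [← Finset.mul_prod_erase Finset.univ
            (fun j : Fin n => x (j.1 + 1) ^ s j / (Nat.factorial (s j) : ℝ))
            (Finset.mem_univ i0),
          ← Finset.mul_prod_erase Finset.univ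
            (fun j : Fin n => x (j.1 + 1) ^ t j / (Nat.factorial (t j) : ℝ))
            (Finset.mem_univ i0)]
        have herase : ∏ j ∈ Finset.univ.erase i0, x (j.1 + 1) ^ s j / (Nat.factorial (s j) : ℝ)
            = ∏ j ∈ Finset.univ.erase i0, x (j.1 + 1) ^ t j / (Nat.factorial (t j) : ℝ) := by
          refine Finset.prod_congr rfl fun j hj => ?_
          have hji : j ≠ i0 := (Finset.mem_erase.1 hj).1
          have : j.1 ≠ i - 1 := fun hh => hji (Fin.ext hh)
          simp only [htdef, if_neg this, Nat.sub_zero]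
        rw [herase, ← mul_assoc, ← mul_assoc]
        congr 1
        have hti0 : t i0 = s i0 - 1 := by
          simp [htdef, hi0def]
        have hii : (i0 : ℕ) + 1 = i := by
          simp only [hi0def]
          omega
        rw [hti0, hii]
        exact fact_step (x i) (s i0) hs1
      rw [hstep]
      congr 1
      have htr : (∏ j : Fin n, x (j.1 + 1) ^ t j / (Nat.factorial (t j) : ℝ))
          = ∏ j : Fin d, x ((j : ℕ) + 1) ^ t ⟨j.1, lt_of_lt_of_le j.2 hdn⟩
              / (Nat.factorial (t ⟨j.1, lt_of_lt_of_le j.2 hdn⟩) : ℝ) :=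
        prod_fin_truncate hdn (fun m v => x (m + 1) ^ v / (Nat.factorial v : ℝ)) t
          (fun j hj => by
            have hz : t j = 0 := by simp only [htdef]; rw [e3 j hj]; omega
            simp [hz])
      rw [htr]
  rw [step1, step2, ← Finset.mul_sum]
  rfl
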